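/- Let s ≥ 3 and m ≥ s be integers and n = sm. For 1 ≤ i ≤ s-1 let F_i = {X ⊆ [n] : |X| = m - i and |X ∩ [s-1]| ≥ i}. Then the family S = {X ⊆ [n] : |X| ≥ m} ∪ F_1 ∪ ⋯ ∪ F_{s-1} is K_{s×2}-free. -/

import Mathlib

open Finset

/-- The family `F` of subsets of `[n]` contains a copy of the complete `s`-partite
graph `K_{s×t}` (all parts of size `t`) in the Kneser cube: there are `s·t` pairwise
distinct members `A j i ∈ F` such that sets belonging to different groups `j ≠ j'`
are disjoint. -/
def containsKst (n s t : ℕ) (F : Finset (Finset (Fin n))) : Prop :=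
  ∃ A : Fin s → Fin t → Finset (Fin n),
    (∀ j i, A j i ∈ F) ∧
    Function.Injective (fun p : Fin s × Fin t => A p.1 p.2) ∧
    ∀ j j' : Fin s, j ≠ j' → ∀ i i' : Fin t, Disjoint (A j i) (A j' i')

/-- `vexKst n s t` : the maximum size of a `K_{s×t}`-free family of subsets of `[n]`. -/
noncomputable def vexKst (n s t : ℕ) : ℕ :=
  sSup {k | ∃ F : Finset (Finset (Fin n)), ¬ containsKst n s t F ∧ F.card = k}

open scoped Classical in
/-- for `n = sm`, the family consisting of all subsets of size at least `m`
together with, for `1 ≤ i ≤ s-1`, all subsets of size `m - i` containing at least `i`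
elements of `[s-1]` (the first `s-1` elements of the ground set) is `K_{s×2}`-free. -/
theorem stmt4 (s m : ℕ) (hs : 3 ≤ s) (hm : s ≤ m) :
    ¬ containsKst (s * m) s 2
        (univ.filter fun X : Finset (Fin (s * m)) =>
          m ≤ X.card ∨
            ∃ i, 1 ≤ i ∧ i ≤ s - 1 ∧
              X.card = m - i ∧
                i ≤ (X ∩ univ.filter fun y : Fin (s * m) => (y : ℕ) < s - 1).card) := by
  classical
  rintro ⟨A, hmem, hinj, hdisj⟩
  set P : Finset (Fin (s * m)) :=
    univ.filter fun y : Fin (s * m) => (y : ℕ) < s - 1 with hPdef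
  -- every member of the family satisfies |X| + |X ∩ P| ≥ m
  have key : ∀ j i, m ≤ (A j i).card + ((A j i) ∩ P).card := by
    intro j i
    have h := hmem j i
    rw [mem_filter] at h
    rcases h.2 with h1 | ⟨i0, hi1, hi2, hi3, hi4⟩
    · omega
    · omega
  -- the pair in each group gives |U_j| + |U_j ∩ P| ≥ m + 1
  set U : Fin s → Finset (Fin (s * m)) := fun j => A j 0 ∪ A j 1 with hUdef
  have claim : ∀ j, m + 1 ≤ (U j).card + ((U j) ∩ P).card := by
    intro j
    have hne : A j 0 ≠ A j 1 := by
      intro h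
      have := hinj (a₁ := (j, 0)) (a₂ := (j, 1)) h
      simp at this
    by_cases hU : U j = A j 0
    · have hsub : A j 1 ⊂ A j 0 := by
        rw [Finset.ssubset_iff_subset_ne]
        exact ⟨by rw [← hU]; exact subset_union_right, fun h => hne h.symm⟩
      have h1 : (A j 1).card < (A j 0).card := card_lt_card hsub
      have h2 : ((A j 1) ∩ P).card ≤ ((U j) ∩ P).card :=
        card_le_card (inter_subset_inter (by rw [hUdef]; exact subset_union_right) (Finset.Subset.refl _))
      have h0 : (U j).card = (A j 0).card := by rw [hU]
      have := key j 1
      omega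
    · have hsub : A j 0 ⊂ U j := ⟨subset_union_left, fun h => hU (Finset.Subset.antisymm h subset_union_left)⟩
      have h1 : (A j 0).card < (U j).card := card_lt_card hsub
      have h2 : ((A j 0) ∩ P).card ≤ ((U j) ∩ P).card :=
        card_le_card (inter_subset_inter subset_union_left (Finset.Subset.refl _))
      have := key j 0
      omega
  -- the U_j are pairwise disjoint
  have hdisjU : ∀ j ∈ (univ : Finset (Fin s)), ∀ j' ∈ (univ : Finset (Fin s)),
      j ≠ j' → Disjoint (U j) (U j') := by
    intro j _ j' _ hjj
    simp only [hUdef, disjoint_union_left, disjoint_union_right]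
    constructor <;> constructor <;> apply hdisj j j' hjj
  have sum1 : ∑ j : Fin s, (U j).card ≤ s * m := by
    rw [← card_biUnion hdisjU]
    calc ((univ : Finset (Fin s)).biUnion U).card ≤ (univ : Finset (Fin (s * m))).card :=
          card_le_card (subset_univ _)
      _ = s * m := by simp
  have hPcard : P.card ≤ s - 1 := by
    calc P.card ≤ (Finset.range (s - 1)).card := by
          refine card_le_card_of_injOn Fin.val ?_ ?_
          · intro y hy
            rw [hPdef, mem_coe, mem_filter] at hy
            exact mem_coe.mpr (mem_range.mpr hy.2)
          · intro a _ b _ h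
            exact Fin.val_injective h
      _ = s - 1 := card_range _
  have sum2 : ∑ j : Fin s, ((U j) ∩ P).card ≤ s - 1 := by
    have hd : ∀ j ∈ (univ : Finset (Fin s)), ∀ j' ∈ (univ : Finset (Fin s)),
        j ≠ j' → Disjoint ((U j) ∩ P) ((U j') ∩ P) := by
      intro j hj j' hj' hjj
      exact (hdisjU j hj j' hj' hjj).mono inter_subset_left inter_subset_left
    rw [← card_biUnion hd]
    calc ((univ : Finset (Fin s)).biUnion fun j => (U j) ∩ P).card ≤ P.card := by
          apply card_le_card
          intro x hx
          rw [mem_biUnion] at hx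
          obtain ⟨j, _, hj⟩ := hx
          exact (mem_inter.mp hj).2
      _ ≤ s - 1 := hPcard
  have sum3 : s * (m + 1) ≤ ∑ j : Fin s, ((U j).card + ((U j) ∩ P).card) := by
    calc s * (m + 1) = ∑ _j : Fin s, (m + 1) := by simp [mul_comm]
      _ ≤ _ := Finset.sum_le_sum fun j _ => claim j
  rw [Finset.sum_add_distrib] at sum3
  have : s * (m + 1) = s * m + s := by ring
  omega
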